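/- For generational pedigrees P and P' with g generations and for generation-preserving matchings, the quantities B_i satisfy the dynamic-programming recurrence: for every i ∈ {1,...,g-1} and every matching M of generation i, B_i(M) = min over matchings M' of generation i+1 of [B_{i+1}(M') + d_{{i,i+1}}(M ∪ M')], where d_{{i,i+1}} counts mismatched edges between generations i and i+1. -/

import Mathlib

/-- A generational pedigree graph: every edge goes from generation `i` to
generation `i+1`. -/
structure GPed (V : Type*) [Fintype V] where
  E : Set (V × V)
  gender : V → Bool
  gen : V → ℕ
  consec : ∀ e ∈ E, gen e.2 = gen e.1 + 1

variable {V V' : Type*} [Fintype V] [Fintype V']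

/-- A generation-preserving matching with domain exactly the generations in
`S`: injective, gender-preserving and generation-preserving. -/
def IsGMatch (P : GPed V) (P' : GPed V') (S : Set ℕ) (M : V → Option V') : Prop :=
  (∀ u v w, M u = some w → M v = some w → u = v) ∧
  (∀ u w, M u = some w → P.gender u = P'.gender w ∧ P'.gen w = P.gen u) ∧
  (∀ u, (M u).isSome = true ↔ P.gen u ∈ S)

/-- The edges of the sub-pedigree induced by the generations in `S`. -/
def ES (P : GPed V) (S : Set ℕ) : Set (V × V) :=
  {e ∈ P.E | P.gen e.1 ∈ S ∧ P.gen e.2 ∈ S}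

/-- Edges of `P|_S` well-matched by `M`. -/
def WS (P : GPed V) (P' : GPed V') (S : Set ℕ) (M : V → Option V') : Set (V × V) :=
  {e ∈ ES P S | ∃ a b, M e.1 = some a ∧ M e.2 = some b ∧ (a, b) ∈ ES P' S}

/-- Image in `P'|_S` of the well-matched edges. -/
def imgWS (P : GPed V) (P' : GPed V') (S : Set ℕ) (M : V → Option V') : Set (V' × V') :=
  {e' ∈ ES P' S | ∃ u v, (u, v) ∈ ES P S ∧ M u = some e'.1 ∧ M v = some e'.2}

/-- The match distance of `M` restricted to the generations in `S`. -/
noncomputable def dS (P : GPed V) (P' : GPed V') (S : Set ℕ) (M : V → Option V') : ℕ :=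
  (ES P S \ WS P P' S M).ncard + (ES P' S \ imgWS P P' S M).ncard

/-- `B_i(M)`: the minimum, over generation-preserving matchings `N` of
generations `i,…,g` agreeing with `M` on generation `i`, of the match distance
of `N` between `P|_{i,…,g}` and `P'|_{i,…,g}`. -/
noncomputable def B (P : GPed V) (P' : GPed V') (g i : ℕ) (M : V → Option V') : ℕ :=
  sInf {d | ∃ N : V → Option V', IsGMatch P P' (Set.Icc i g) N ∧
    (∀ u, P.gen u = i → N u = M u) ∧ dS P P' (Set.Icc i g) N = d}

/-- The union of two partial matchings with disjoint domains. -/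
def combine (M M' : V → Option V') : V → Option V' :=
  fun u => match M u with
    | some w => some w
    | none => M' u

lemma dS_congr (P : GPed V) (P' : GPed V') (S : Set ℕ) {N N' : V → Option V'}
    (h : ∀ v, P.gen v ∈ S → N v = N' v) : dS P P' S N = dS P P' S N' := by
  have hW : WS P P' S N = WS P P' S N' := by
    ext e
    simp only [WS, ES, Set.mem_setOf_eq]
    constructor <;> rintro ⟨he, a, b, h1, h2, h3⟩ <;> refine ⟨he, a, b, ?_, ?_, h3⟩
    · rw [← h _ he.2.1]; exact h1
    · rw [← h _ he.2.2]; exact h2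
    · rw [h _ he.2.1]; exact h1
    · rw [h _ he.2.2]; exact h2
  have hI : imgWS P P' S N = imgWS P P' S N' := by
    ext e'
    simp only [imgWS, ES, Set.mem_setOf_eq]
    constructor <;> rintro ⟨he, u, v, h1, h2, h3⟩ <;> refine ⟨he, u, v, h1, ?_, ?_⟩
    · rw [← h _ h1.2.1]; exact h2
    · rw [← h _ h1.2.2]; exact h3
    · rw [h _ h1.2.1]; exact h2
    · rw [h _ h1.2.2]; exact h3
  unfold dS; rw [hW, hI]
lemma ES_split (P : GPed V) {i g : ℕ} (hig : i < g) :
    ES P (Set.Icc i g) = ES P {i, i+1} ∪ ES P (Set.Icc (i+1) g) := by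
  ext e
  simp only [ES, Set.mem_setOf_eq, Set.mem_union, Set.mem_Icc, Set.mem_insert_iff,
    Set.mem_singleton_iff]
  constructor
  · rintro ⟨he, h1, h2⟩
    have hc := P.consec e he
    rcases Nat.lt_or_ge (P.gen e.1) (i+1) with h | h
    · exact Or.inl ⟨he, by omega, by omega⟩
    · exact Or.inr ⟨he, by omega, by omega⟩
  · rintro (⟨he, h1, h2⟩ | ⟨he, h1, h2⟩) <;> have hc := P.consec e he
    · exact ⟨he, by omega, by omega⟩
    · exact ⟨he, by omega, by omega⟩
lemma ES_disj (P : GPed V) {i g : ℕ} :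
    Disjoint (ES P {i, i+1}) (ES P (Set.Icc (i+1) g)) := by
  rw [Set.disjoint_left]
  rintro e he1 he2
  simp only [ES, Set.mem_setOf_eq, Set.mem_Icc, Set.mem_insert_iff,
    Set.mem_singleton_iff] at he1 he2
  have hc := P.consec e he1.1
  omega
lemma WS_diff {P : GPed V} {P' : GPed V'} {N : V → Option V'}
    (hN : ∀ u w, N u = some w → P'.gen w = P.gen u) (S : Set ℕ) :
    ES P S \ WS P P' S N =
      ES P S \ {e : V × V | ∃ a b, N e.1 = some a ∧ N e.2 = some b ∧ (a, b) ∈ P'.E} := by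
  ext e
  simp only [Set.mem_diff, WS, ES, Set.mem_setOf_eq]
  constructor
  · rintro ⟨he, hw⟩
    refine ⟨he, fun hc => hw ?_⟩
    obtain ⟨a, b, ha, hb, hab⟩ := hc
    exact ⟨he, a, b, ha, hb, hab, by rw [hN _ _ ha]; exact he.2.1,
      by rw [hN _ _ hb]; exact he.2.2⟩
  · rintro ⟨he, hw⟩
    refine ⟨he, fun hc => hw ?_⟩
    obtain ⟨_, a, b, ha, hb, hab, _, _⟩ := hc
    exact ⟨a, b, ha, hb, hab⟩
lemma imgWS_diff {P : GPed V} {P' : GPed V'} {N : V → Option V'}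
    (hN : ∀ u w, N u = some w → P'.gen w = P.gen u) (S : Set ℕ) :
    ES P' S \ imgWS P P' S N =
      ES P' S \ {e' : V' × V' | ∃ u v, (u, v) ∈ P.E ∧ N u = some e'.1 ∧ N v = some e'.2} := by
  ext e'
  simp only [Set.mem_diff, imgWS, ES, Set.mem_setOf_eq]
  constructor
  · rintro ⟨he, hw⟩
    refine ⟨he, fun hc => hw ?_⟩
    obtain ⟨u, v, huv, hu, hv⟩ := hc
    refine ⟨he, u, v, ⟨huv, ?_, ?_⟩, hu, hv⟩
    · rw [← hN _ _ hu]; exact he.2.1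
    · rw [← hN _ _ hv]; exact he.2.2
  · rintro ⟨he, hw⟩
    refine ⟨he, fun hc => hw ?_⟩
    obtain ⟨_, u, v, huv, hu, hv⟩ := hc
    exact ⟨u, v, huv.1, hu, hv⟩
lemma dS_split (P : GPed V) (P' : GPed V') {i g : ℕ} (hig : i < g)
    {N : V → Option V'} (hN : ∀ u w, N u = some w → P'.gen w = P.gen u) :
    dS P P' (Set.Icc i g) N = dS P P' {i, i+1} N + dS P P' (Set.Icc (i+1) g) N := by
  unfold dS
  rw [WS_diff hN, WS_diff hN, WS_diff hN, imgWS_diff hN, imgWS_diff hN, imgWS_diff hN,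
    ES_split P hig, ES_split P' hig, Set.union_diff_distrib, Set.union_diff_distrib,
    Set.ncard_union_eq (Disjoint.mono Set.diff_subset Set.diff_subset (ES_disj P)),
    Set.ncard_union_eq (Disjoint.mono Set.diff_subset Set.diff_subset (ES_disj P'))]
  omega
lemma exists_gmatch_ext (P : GPed V) (P' : GPed V')
    (hcard : ∀ (j : ℕ) (b : Bool),
      {v : V | P.gen v = j ∧ P.gender v = b}.ncard =
      {v : V' | P'.gen v = j ∧ P'.gender v = b}.ncard)
    (S : Set ℕ) (j : ℕ) (hj : j ∈ S) (M : V → Option V') (hM : IsGMatch P P' {j} M) :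
    ∃ N, IsGMatch P P' S N ∧ ∀ u, P.gen u = j → N u = M u := by
  classical
  have hne : ∀ (k : ℕ) (b : Bool),
      Nonempty ({v : V | P.gen v = k ∧ P.gender v = b} ≃
        {v' : V' | P'.gen v' = k ∧ P'.gender v' = b}) := by
    intro k b
    apply Finite.card_eq.mp
    rw [Nat.card_coe_set_eq, Nat.card_coe_set_eq]
    exact hcard k b
  have E := fun k b => (hne k b).some
  have Eprop : ∀ k b x, P'.gen (E k b x : V') = k ∧ P'.gender (E k b x : V') = b :=
    fun k b x => (E k b x).2
  have Einj : ∀ (k : ℕ) (b : Bool) x (k' : ℕ) (b' : Bool) y,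
      (E k b x : V') = (E k' b' y : V') → (x : V) = (y : V) := by
    intro k b x k' b' y h
    obtain ⟨h1, h2⟩ := Eprop k b x
    obtain ⟨h1', h2'⟩ := Eprop k' b' y
    rw [h] at h1 h2
    obtain rfl : k = k' := by rw [← h1]; exact h1'
    obtain rfl : b = b' := by rw [← h2]; exact h2'
    exact congrArg Subtype.val ((E k b).injective (Subtype.ext h))
  refine ⟨fun v => if P.gen v = j then M v else
      (if P.gen v ∈ S then some (E (P.gen v) (P.gender v) ⟨v, rfl, rfl⟩) else none),
    ⟨?_, ?_, ?_⟩, ?_⟩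
  · intro u v w hu hv
    dsimp only at hu hv
    by_cases hju : P.gen u = j <;> by_cases hjv : P.gen v = j
    · rw [if_pos hju] at hu; rw [if_pos hjv] at hv
      exact hM.1 u v w hu hv
    · rw [if_pos hju] at hu; rw [if_neg hjv] at hv
      by_cases hS : P.gen v ∈ S
      · rw [if_pos hS] at hv
        obtain rfl := Option.some.inj hv
        exact absurd ((Eprop _ _ _).1.symm.trans ((hM.2.1 u _ hu).2.trans hju)) hjv
      · rw [if_neg hS] at hv; exact nomatch hv
    · rw [if_neg hju] at hu; rw [if_pos hjv] at hv
      by_cases hS : P.gen u ∈ S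
      · rw [if_pos hS] at hu
        obtain rfl := Option.some.inj hu
        exact absurd ((Eprop _ _ _).1.symm.trans ((hM.2.1 v _ hv).2.trans hjv)) hju
      · rw [if_neg hS] at hu; exact nomatch hu
    · rw [if_neg hju] at hu; rw [if_neg hjv] at hv
      by_cases hSu : P.gen u ∈ S
      · rw [if_pos hSu] at hu
        by_cases hSv : P.gen v ∈ S
        · rw [if_pos hSv] at hv
          exact Einj _ _ _ _ _ _ ((Option.some.inj hu).trans (Option.some.inj hv).symm)
        · rw [if_neg hSv] at hv; exact nomatch hv
      · rw [if_neg hSu] at hu; exact nomatch hu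
  · intro u w hu
    dsimp only at hu
    by_cases hju : P.gen u = j
    · rw [if_pos hju] at hu; exact hM.2.1 u w hu
    · rw [if_neg hju] at hu
      by_cases hS : P.gen u ∈ S
      · rw [if_pos hS] at hu
        obtain rfl := Option.some.inj hu
        exact ⟨(Eprop _ _ _).2.symm, (Eprop _ _ _).1⟩
      · rw [if_neg hS] at hu; exact nomatch hu
  · intro u
    dsimp only
    by_cases hju : P.gen u = j
    · rw [if_pos hju, hM.2.2 u]
      simp only [Set.mem_singleton_iff, hju]
      exact ⟨fun _ => hj, fun _ => trivial⟩
    · rw [if_neg hju]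
      by_cases hS : P.gen u ∈ S
      · rw [if_pos hS]; simpa using hS
      · rw [if_neg hS]; simpa using hS
  · intro u hu; dsimp only; rw [if_pos hu]
lemma exists_gmatch (P : GPed V) (P' : GPed V')
    (hcard : ∀ (j : ℕ) (b : Bool),
      {v : V | P.gen v = j ∧ P.gender v = b}.ncard =
      {v : V' | P'.gen v = j ∧ P'.gender v = b}.ncard)
    (S : Set ℕ) : ∃ N, IsGMatch P P' S N := by
  classical
  have hne : ∀ (k : ℕ) (b : Bool),
      Nonempty ({v : V | P.gen v = k ∧ P.gender v = b} ≃
        {v' : V' | P'.gen v' = k ∧ P'.gender v' = b}) := by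
    intro k b
    apply Finite.card_eq.mp
    rw [Nat.card_coe_set_eq, Nat.card_coe_set_eq]
    exact hcard k b
  have E := fun k b => (hne k b).some
  have Eprop : ∀ k b x, P'.gen (E k b x : V') = k ∧ P'.gender (E k b x : V') = b :=
    fun k b x => (E k b x).2
  have Einj : ∀ (k : ℕ) (b : Bool) x (k' : ℕ) (b' : Bool) y,
      (E k b x : V') = (E k' b' y : V') → (x : V) = (y : V) := by
    intro k b x k' b' y h
    obtain ⟨h1, h2⟩ := Eprop k b x
    obtain ⟨h1', h2'⟩ := Eprop k' b' y
    rw [h] at h1 h2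
    obtain rfl : k = k' := by rw [← h1]; exact h1'
    obtain rfl : b = b' := by rw [← h2]; exact h2'
    exact congrArg Subtype.val ((E k b).injective (Subtype.ext h))
  refine ⟨fun v => if P.gen v ∈ S then some (E (P.gen v) (P.gender v) ⟨v, rfl, rfl⟩) else none,
    ?_, ?_, ?_⟩
  · intro u v w hu hv
    dsimp only at hu hv
    by_cases hSu : P.gen u ∈ S
    · rw [if_pos hSu] at hu
      by_cases hSv : P.gen v ∈ S
      · rw [if_pos hSv] at hv
        exact Einj _ _ _ _ _ _ ((Option.some.inj hu).trans (Option.some.inj hv).symm)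
      · rw [if_neg hSv] at hv; exact nomatch hv
    · rw [if_neg hSu] at hu; exact nomatch hu
  · intro u w hu
    dsimp only at hu
    by_cases hS : P.gen u ∈ S
    · rw [if_pos hS] at hu
      obtain rfl := Option.some.inj hu
      exact ⟨(Eprop _ _ _).2.symm, (Eprop _ _ _).1⟩
    · rw [if_neg hS] at hu; exact nomatch hu
  · intro u
    dsimp only
    by_cases hS : P.gen u ∈ S
    · rw [if_pos hS]; simpa using hS
    · rw [if_neg hS]; simpa using hS
lemma combine_pos {M X : V → Option V'} {v : V} (h : (M v).isSome) : combine M X v = M v := by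
  obtain ⟨w, hw⟩ := Option.isSome_iff_exists.mp h
  simp [combine, hw]
lemma combine_neg {M X : V → Option V'} {v : V} (h : M v = none) : combine M X v = X v := by
  simp [combine, h]
lemma restrict_gmatch {P : GPed V} {P' : GPed V'} {S T : Set ℕ} {N N' : V → Option V'}
    (hN : IsGMatch P P' S N) (hT : ∀ k, k ∈ T → k ∈ S)
    (h1 : ∀ v, P.gen v ∈ T → N' v = N v) (h2 : ∀ v, P.gen v ∉ T → N' v = none) :
    IsGMatch P P' T N' := by
  refine ⟨?_, ?_, ?_⟩
  · intro u v w hu hv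
    by_cases hTu : P.gen u ∈ T
    · by_cases hTv : P.gen v ∈ T
      · rw [h1 u hTu] at hu; rw [h1 v hTv] at hv; exact hN.1 u v w hu hv
      · rw [h2 v hTv] at hv; exact nomatch hv
    · rw [h2 u hTu] at hu; exact nomatch hu
  · intro u w hu
    by_cases hTu : P.gen u ∈ T
    · rw [h1 u hTu] at hu; exact hN.2.1 u w hu
    · rw [h2 u hTu] at hu; exact nomatch hu
  · intro u
    by_cases hTu : P.gen u ∈ T
    · rw [h1 u hTu, hN.2.2 u]; exact ⟨fun _ => hTu, fun _ => hT _ hTu⟩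
    · rw [h2 u hTu]; simpa using hTu
lemma combine_gmatch {P : GPed V} {P' : GPed V'} {i g : ℕ} (hig : i ≤ g)
    {M N₂ : V → Option V'} (hM : IsGMatch P P' {i} M)
    (hN₂ : IsGMatch P P' (Set.Icc (i+1) g) N₂) :
    IsGMatch P P' (Set.Icc i g) (combine M N₂) := by
  have hMnone : ∀ v, P.gen v ≠ i → M v = none := fun v h =>
    Option.not_isSome_iff_eq_none.mp (fun hs => h ((hM.2.2 v).mp hs))
  have hMsome : ∀ v, P.gen v = i → (M v).isSome := fun v h => (hM.2.2 v).mpr h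
  have cM : ∀ v, P.gen v = i → combine M N₂ v = M v := fun v h => combine_pos (hMsome v h)
  have cN : ∀ v, P.gen v ≠ i → combine M N₂ v = N₂ v := fun v h => combine_neg (hMnone v h)
  refine ⟨?_, ?_, ?_⟩
  · intro u v w hu hv
    by_cases hiu : P.gen u = i <;> by_cases hiv : P.gen v = i
    · rw [cM u hiu] at hu; rw [cM v hiv] at hv
      exact hM.1 u v w hu hv
    · rw [cM u hiu] at hu; rw [cN v hiv] at hv
      have h1 : P'.gen w = i := (hM.2.1 u w hu).2.trans hiu
      have h2 : P'.gen w = P.gen v := (hN₂.2.1 v w hv).2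
      have h3 : P.gen v ∈ Set.Icc (i+1) g := (hN₂.2.2 v).mp (by rw [hv]; rfl)
      rw [Set.mem_Icc] at h3
      omega
    · rw [cN u hiu] at hu; rw [cM v hiv] at hv
      have h1 : P'.gen w = i := (hM.2.1 v w hv).2.trans hiv
      have h2 : P'.gen w = P.gen u := (hN₂.2.1 u w hu).2
      have h3 : P.gen u ∈ Set.Icc (i+1) g := (hN₂.2.2 u).mp (by rw [hu]; rfl)
      rw [Set.mem_Icc] at h3
      omega
    · rw [cN u hiu] at hu; rw [cN v hiv] at hv
      exact hN₂.1 u v w hu hv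
  · intro u w hu
    by_cases hiu : P.gen u = i
    · rw [cM u hiu] at hu; exact hM.2.1 u w hu
    · rw [cN u hiu] at hu; exact hN₂.2.1 u w hu
  · intro u
    by_cases hiu : P.gen u = i
    · rw [cM u hiu]
      have hs : (M u).isSome = true := hMsome u hiu
      simp [hs, Set.mem_Icc]
      omega
    · rw [cN u hiu, hN₂.2.2 u]
      simp only [Set.mem_Icc]
      omega

/-- the dynamic-programming recurrence
`B_i(M) = min_{M' ∈ 𝓜({i+1})} (B_{i+1}(M') + d_{{i,i+1}}(M ∪ M'))`
for `1 ≤ i < g`, for generational pedigrees with `g` generations in which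
males and females are equinumerous generation by generation. -/
theorem B_recurrence (P : GPed V) (P' : GPed V') (g : ℕ)
    (hgen : ∀ v : V, 1 ≤ P.gen v ∧ P.gen v ≤ g)
    (hgen' : ∀ v : V', 1 ≤ P'.gen v ∧ P'.gen v ≤ g)
    (hcard : ∀ (j : ℕ) (b : Bool),
      {v : V | P.gen v = j ∧ P.gender v = b}.ncard =
      {v : V' | P'.gen v = j ∧ P'.gender v = b}.ncard)
    (i : ℕ) (hi1 : 1 ≤ i) (hi2 : i < g)
    (M : V → Option V') (hM : IsGMatch P P' {i} M) :
    B P P' g i M = sInf {x | ∃ M' : V → Option V',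
      IsGMatch P P' {i + 1} M' ∧
      x = B P P' g (i + 1) M' + dS P P' {i, i + 1} (combine M M')} := by
  classical
  have hMnone : ∀ v, P.gen v ≠ i → M v = none := fun v h =>
    Option.not_isSome_iff_eq_none.mp (fun hs => h ((hM.2.2 v).mp hs))
  have hMsome : ∀ v, P.gen v = i → (M v).isSome := fun v h => (hM.2.2 v).mpr h
  set A := {d | ∃ N : V → Option V', IsGMatch P P' (Set.Icc i g) N ∧
    (∀ u, P.gen u = i → N u = M u) ∧ dS P P' (Set.Icc i g) N = d} with hAdef
  set R := {x | ∃ M' : V → Option V', IsGMatch P P' {i + 1} M' ∧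
      x = B P P' g (i + 1) M' + dS P P' {i, i + 1} (combine M M')} with hRdef
  have hAne : A.Nonempty := by
    obtain ⟨N, h1, h2⟩ := exists_gmatch_ext P P' hcard (Set.Icc i g) i
      ⟨le_rfl, le_of_lt hi2⟩ M hM
    exact ⟨_, N, h1, h2, rfl⟩
  have hRne : R.Nonempty := by
    obtain ⟨M', h1⟩ := exists_gmatch P P' hcard {i+1}
    exact ⟨_, M', h1, rfl⟩
  show sInf A = sInf R
  apply le_antisymm
  · -- sInf A ≤ sInf R
    obtain ⟨M', hM', hx⟩ := Nat.sInf_mem hRne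
    have hM'none : ∀ v, P.gen v ≠ i+1 → M' v = none := fun v h =>
      Option.not_isSome_iff_eq_none.mp (fun hs => h ((hM'.2.2 v).mp hs))
    obtain ⟨N0, h1, h2⟩ := exists_gmatch_ext P P' hcard (Set.Icc (i+1) g) (i+1)
      ⟨le_rfl, hi2⟩ M' hM'
    have hBset : {d | ∃ N : V → Option V', IsGMatch P P' (Set.Icc (i+1) g) N ∧
        (∀ u, P.gen u = i+1 → N u = M' u) ∧ dS P P' (Set.Icc (i+1) g) N = d}.Nonempty :=
      ⟨_, N0, h1, h2, rfl⟩
    obtain ⟨N₂, hN₂, hagree, hBeq⟩ := Nat.sInf_mem hBset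
    have cM : ∀ v, P.gen v = i → combine M N₂ v = M v := fun v h => combine_pos (hMsome v h)
    have cN : ∀ v, P.gen v ≠ i → combine M N₂ v = N₂ v := fun v h => combine_neg (hMnone v h)
    have hNm : IsGMatch P P' (Set.Icc i g) (combine M N₂) :=
      combine_gmatch (le_of_lt hi2) hM hN₂
    have hdT : dS P P' {i, i+1} (combine M N₂) = dS P P' {i, i+1} (combine M M') := by
      apply dS_congr
      intro v hv
      simp only [Set.mem_insert_iff, Set.mem_singleton_iff] at hv
      rcases hv with hv | hv
      · rw [cM v hv, combine_pos (hMsome v hv)]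
      · have hvne : P.gen v ≠ i := by rw [hv]; exact i.succ_ne_self
        rw [cN v hvne, combine_neg (hMnone v hvne), hagree v hv]
    have hdS2 : dS P P' (Set.Icc (i+1) g) (combine M N₂) = dS P P' (Set.Icc (i+1) g) N₂ := by
      apply dS_congr
      intro v hv
      rw [Set.mem_Icc] at hv
      have hvne : P.gen v ≠ i := Nat.ne_of_gt (Nat.lt_of_lt_of_le (Nat.lt_succ_self i) hv.1)
      exact cN v hvne
    have hsplit := dS_split P P' hi2 (fun u w h => (hNm.2.1 u w h).2)
    have hmem : dS P P' (Set.Icc i g) (combine M N₂) ∈ A := ⟨combine M N₂, hNm, cM, rfl⟩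
    calc sInf A ≤ dS P P' (Set.Icc i g) (combine M N₂) := Nat.sInf_le hmem
      _ = dS P P' {i,i+1} (combine M N₂) + dS P P' (Set.Icc (i+1) g) (combine M N₂) := hsplit
      _ = B P P' g (i+1) M' + dS P P' {i,i+1} (combine M M') := by
          rw [hdT, hdS2, hBeq]
          exact Nat.add_comm _ _
      _ = sInf R := hx.symm
  · -- sInf R ≤ sInf A
    obtain ⟨N, hN, hagreeM, hdN⟩ := Nat.sInf_mem hAne
    set M' : V → Option V' := fun v => if P.gen v ∈ ({i+1} : Set ℕ) then N v else none
      with hM'def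
    have hM'm : IsGMatch P P' {i+1} M' := restrict_gmatch hN (by
        intro k hk
        simp only [Set.mem_singleton_iff] at hk
        rw [Set.mem_Icc]
        omega)
      (fun v hv => if_pos hv) (fun v hv => if_neg hv)
    set N₂ : V → Option V' := fun v => if P.gen v ∈ Set.Icc (i+1) g then N v else none
      with hN₂def
    have hN₂m : IsGMatch P P' (Set.Icc (i+1) g) N₂ := restrict_gmatch hN (by
        intro k hk
        rw [Set.mem_Icc] at *
        omega)
      (fun v hv => if_pos hv) (fun v hv => if_neg hv)
    have hagree2 : ∀ u, P.gen u = i+1 → N₂ u = M' u := by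
      intro u hu
      simp only [hN₂def, hM'def]
      rw [if_pos (by rw [Set.mem_Icc]; omega), if_pos (by exact hu)]
    have hBle : B P P' g (i+1) M' ≤ dS P P' (Set.Icc (i+1) g) N₂ :=
      Nat.sInf_le ⟨N₂, hN₂m, hagree2, rfl⟩
    have hdS2 : dS P P' (Set.Icc (i+1) g) N₂ = dS P P' (Set.Icc (i+1) g) N := by
      apply dS_congr
      intro v hv
      simp only [hN₂def]
      rw [if_pos hv]
    have hdT : dS P P' {i,i+1} (combine M M') = dS P P' {i,i+1} N := by
      apply dS_congr
      intro v hv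
      simp only [Set.mem_insert_iff, Set.mem_singleton_iff] at hv
      rcases hv with hv | hv
      · rw [combine_pos (hMsome v hv), hagreeM v hv]
      · have hvne : P.gen v ≠ i := by rw [hv]; exact i.succ_ne_self
        rw [combine_neg (hMnone v hvne)]
        simp only [hM'def]
        rw [if_pos (by exact hv)]
    have hsplit := dS_split P P' hi2 (fun u w h => (hN.2.1 u w h).2)
    have hmemR : B P P' g (i+1) M' + dS P P' {i,i+1} (combine M M') ∈ R := ⟨M', hM'm, rfl⟩
    calc sInf R ≤ B P P' g (i+1) M' + dS P P' {i,i+1} (combine M M') := Nat.sInf_le hmemR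
      _ ≤ dS P P' (Set.Icc (i+1) g) N + dS P P' {i,i+1} N := by
          rw [hdT]
          exact Nat.add_le_add_right (hBle.trans_eq hdS2) _
      _ = dS P P' (Set.Icc i g) N := by rw [hsplit]; exact Nat.add_comm _ _
      _ = sInf A := hdN
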